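/- Let (X, ‖·‖, ≼) be a partially ordered Banach space. If the order ≼ is regular, then it is normal: there exists λ > 0 such that 0 ≼ x ≼ y implies ‖x‖ ≤ λ‖y‖. (part of Theorem 2.2.2 in [10]) -/

import Mathlib

/-- The partial order on a Banach space induced by a cone `K`: `x ≼ y` iff `y - x ∈ K`. -/
def coneLe {X : Type*} [NormedAddCommGroup X] (K : Set X) (x y : X) : Prop := y - x ∈ K

/-- Part of Theorem 2.2.2 in [10]: in a partially ordered Banach space, if the order is
regular then it is normal: there is `λ > 0` such that `0 ≼ x ≼ y` implies `‖x‖ ≤ λ‖y‖`. -/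
theorem regular_implies_normal
    {X : Type*} [NormedAddCommGroup X] [NormedSpace ℝ X] [CompleteSpace X]
    (K : Set X) (hKclosed : IsClosed K) (hK0 : (0 : X) ∈ K)
    (hKadd : ∀ x ∈ K, ∀ y ∈ K, x + y ∈ K)
    (hKsmul : ∀ c : ℝ, 0 ≤ c → ∀ x ∈ K, c • x ∈ K)
    (hKpointed : ∀ x ∈ K, -x ∈ K → x = 0)
    -- regularity: every ≼-increasing ≼-upper-bounded sequence converges in norm
    (hreg : ∀ u : ℕ → X, (∀ n, coneLe K (u n) (u (n + 1))) →
      (∃ b, ∀ n, coneLe K (u n) b) → ∃ p, Filter.Tendsto u Filter.atTop (nhds p)) :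
    ∃ l : ℝ, 0 < l ∧ ∀ x y : X, x ∈ K → y - x ∈ K → ‖x‖ ≤ l * ‖y‖ := by
  by_contra hcon
  push_neg at hcon
  have hch : ∀ n : ℕ, ∃ x y : X, x ∈ K ∧ y - x ∈ K ∧ (2:ℝ)^n * ‖y‖ < ‖x‖ := by
    intro n
    obtain ⟨x, y, hx, hyx, hlt⟩ := hcon ((2:ℝ)^n) (by positivity)
    exact ⟨x, y, hx, hyx, hlt⟩
  choose x y hx hyx hlt using hch
  have hxpos : ∀ n, 0 < ‖x n‖ := fun n => lt_of_le_of_lt (by positivity) (hlt n)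
  set u : ℕ → X := fun n => ‖x n‖⁻¹ • x n with hu
  set v : ℕ → X := fun n => ‖x n‖⁻¹ • y n with hv
  have hun : ∀ n, ‖u n‖ = 1 := by
    intro n
    rw [hu]
    simp only [norm_smul, Real.norm_eq_abs, abs_of_pos (inv_pos.mpr (hxpos n))]
    exact inv_mul_cancel₀ (ne_of_gt (hxpos n))
  have hvnorm : ∀ n, ‖v n‖ ≤ (1/2:ℝ)^n := by
    intro n
    have h2 : (0:ℝ) < 2^n := by positivity
    have := hlt n
    rw [hv]
    simp only [norm_smul, Real.norm_eq_abs, abs_of_pos (inv_pos.mpr (hxpos n)),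
      one_div, inv_pow]
    rw [inv_mul_le_iff₀ (hxpos n), ← div_eq_mul_inv, le_div_iff₀ h2]
    nlinarith [norm_nonneg (y n), (hxpos n)]
  have hsum : Summable v :=
    Summable.of_norm_bounded summable_geometric_two hvnorm
  have hyK : ∀ n, y n ∈ K := by
    intro n
    have := hKadd _ (hyx n) _ (hx n)
    simpa using this
  have hvK : ∀ n, v n ∈ K := fun n =>
    hKsmul _ (inv_nonneg.mpr (norm_nonneg _)) _ (hyK n)
  have huK : ∀ n, u n ∈ K := fun n =>
    hKsmul _ (inv_nonneg.mpr (norm_nonneg _)) _ (hx n)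
  have hvuK : ∀ n, v n - u n ∈ K := by
    intro n
    have : v n - u n = ‖x n‖⁻¹ • (y n - x n) := by rw [hu, hv, smul_sub]
    rw [this]
    exact hKsmul _ (inv_nonneg.mpr (norm_nonneg _)) _ (hyx n)
  have hsumK : ∀ (f : ℕ → X), Summable f → (∀ k, f k ∈ K) → (∑' k, f k) ∈ K := by
    intro f hf hfK
    refine hKclosed.mem_of_tendsto hf.hasSum (Filter.Eventually.of_forall ?_)
    intro s
    exact Finset.sum_induction f (· ∈ K) (fun a b ha hb => hKadd a ha b hb) hK0
      (fun i _ => hfK i)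
  set b := ∑' k, v k with hb
  set w : ℕ → X := fun n => ∑ k ∈ Finset.range n, u k with hw
  have hwmono : ∀ n, coneLe K (w n) (w (n + 1)) := by
    intro n
    unfold coneLe
    have : w (n+1) - w n = u n := by
      rw [hw]; simp [Finset.sum_range_succ]
    rw [this]
    exact huK n
  have hwbd : ∀ n, coneLe K (w n) b := by
    intro n
    unfold coneLe
    have htail : Summable (fun i => v (i + n)) := (summable_nat_add_iff n).2 hsum
    have heq : b - w n = (∑ k ∈ Finset.range n, (v k - u k)) + ∑' i, v (i + n) := by
      have h1 := Summable.sum_add_tsum_nat_add (f := v) n hsum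
      rw [hb, hw, ← h1, Finset.sum_sub_distrib]
      abel
    rw [heq]
    exact hKadd _ (Finset.sum_induction _ (· ∈ K)
        (fun a b ha hb => hKadd a ha b hb) hK0 (fun i _ => hvuK i)) _
      (hsumK _ htail (fun k => hvK (k + n)))
  obtain ⟨p, hp⟩ := hreg w hwmono ⟨b, hwbd⟩
  have hdiff : Filter.Tendsto (fun n => w (n + 1) - w n) Filter.atTop (nhds 0) := by
    have h1 : Filter.Tendsto (fun n => w (n + 1)) Filter.atTop (nhds p) :=
      hp.comp (Filter.tendsto_add_atTop_nat 1)
    simpa using h1.sub hp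
  have hnorm : Filter.Tendsto (fun n => ‖w (n + 1) - w n‖) Filter.atTop (nhds 0) := by
    simpa using hdiff.norm
  have hone : ∀ n, ‖w (n + 1) - w n‖ = 1 := by
    intro n
    have : w (n+1) - w n = u n := by rw [hw]; simp [Finset.sum_range_succ]
    rw [this, hun n]
  rw [funext hone] at hnorm
  have := tendsto_nhds_unique hnorm tendsto_const_nhds
  norm_num at this
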